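/- In the setting where C ⊆ ℝ^n is a salient polyhedral cone, r spans an extremal ray of C, φ : ℝ^n → ℝ^{n−1} is surjective linear with kernel the span of r, and s spans an extremal ray of φ(C): if r' and r'' both span extremal rays of C, neither is a multiple of r, and φ(r') and φ(r'') are both positive multiples of s, then r'' is a positive multiple of r'. -/

import Mathlib

open Finset

/-- The convex cone generated by a set: all finite nonnegative linear combinations. -/
def coneGen {V : Type*} [AddCommGroup V] [Module ℝ V] (S : Set V) : Set V :=
  {x | ∃ (n : ℕ) (c : Fin n → ℝ) (v : Fin n → V),
    (∀ i, 0 ≤ c i) ∧ (∀ i, v i ∈ S) ∧ x = ∑ i, c i • v i}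

/-- A cone is salient if it contains no line. -/
def IsSalient {V : Type*} [AddCommGroup V] [Module ℝ V] (C : Set V) : Prop :=
  ∀ x ∈ C, -x ∈ C → x = 0

/-- A nonzero vector spans an extremal ray of the cone `C`. -/
def IsExtremalVec {V : Type*} [AddCommGroup V] [Module ℝ V] (C : Set V) (v : V) : Prop :=
  v ≠ 0 ∧ v ∈ C ∧ ∀ x y, x ∈ C → y ∈ C → v = x + y →
    (∃ a : ℝ, 0 ≤ a ∧ x = a • v) ∧ (∃ b : ℝ, 0 ≤ b ∧ y = b • v)

lemma coneGen_smul {V : Type*} [AddCommGroup V] [Module ℝ V] {S : Set V}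
    {x : V} (hx : x ∈ coneGen S) {a : ℝ} (ha : 0 ≤ a) : a • x ∈ coneGen S := by
  obtain ⟨m, c, v, hc, hv, rfl⟩ := hx
  exact ⟨m, fun i => a * c i, v, fun i => mul_nonneg ha (hc i), hv, by
    rw [Finset.smul_sum]; simp [mul_smul]⟩

lemma coneGen_add {V : Type*} [AddCommGroup V] [Module ℝ V] {S : Set V}
    {x y : V} (hx : x ∈ coneGen S) (hy : y ∈ coneGen S) : x + y ∈ coneGen S := by
  obtain ⟨m, c, v, hc, hv, rfl⟩ := hx
  obtain ⟨m', c', v', hc', hv', rfl⟩ := hy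
  refine ⟨m + m', Fin.addCases c c', Fin.addCases v v', ?_, ?_, ?_⟩
  · intro i
    refine Fin.addCases (fun j => ?_) (fun j => ?_) i
    · simpa using hc j
    · simpa using hc' j
  · intro i
    refine Fin.addCases (fun j => ?_) (fun j => ?_) i
    · simpa using hv j
    · simpa using hv' j
  · rw [Fin.sum_univ_add]; simp

theorem unique_extremal_ray_over_edge {n : ℕ}
    (C : Set (Fin (n + 1) → ℝ)) (S : Set (Fin (n + 1) → ℝ)) (hS : S.Finite)
    (hC : C = coneGen S) (hsal : IsSalient C)
    (r : Fin (n + 1) → ℝ) (hr : IsExtremalVec C r)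
    (φ : (Fin (n + 1) → ℝ) →ₗ[ℝ] (Fin n → ℝ))
    (hsurj : Function.Surjective φ)
    (hker : LinearMap.ker φ = Submodule.span ℝ {r})
    (s : Fin n → ℝ) (hs : IsExtremalVec (φ '' C) s)
    (r' r'' : Fin (n + 1) → ℝ)
    (hr' : IsExtremalVec C r') (hr'' : IsExtremalVec C r'')
    (hr'r : ∀ c : ℝ, r' ≠ c • r) (hr''r : ∀ c : ℝ, r'' ≠ c • r)
    (t' : ℝ) (ht' : 0 < t') (hφr' : φ r' = t' • s)
    (t'' : ℝ) (ht'' : 0 < t'') (hφr'' : φ r'' = t'' • s) :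
    ∃ c : ℝ, 0 < c ∧ r'' = c • r' := by
  obtain ⟨hr0, hrC, _⟩ := hr
  obtain ⟨hr'0, hr'C, hr'ext⟩ := hr'
  obtain ⟨hr''0, hr''C, hr''ext⟩ := hr''
  set a : ℝ := t'' / t' with ha_def
  have ha : 0 < a := div_pos ht'' ht'
  have hker_mem : r'' - a • r' ∈ LinearMap.ker φ := by
    simp only [LinearMap.mem_ker, map_sub, map_smul, hφr', hφr'', smul_smul]
    rw [ha_def, div_mul_cancel₀ _ (ne_of_gt ht'), sub_self]
  rw [hker, Submodule.mem_span_singleton] at hker_mem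
  obtain ⟨c, hc⟩ := hker_mem
  have heq : r'' = a • r' + c • r := by
    have := hc.symm; linear_combination (norm := module) this
  rcases le_or_gt 0 c with hc0 | hc0
  · -- r'' = a•r' + c•r with both in C
    have hx : a • r' ∈ C := by rw [hC] at hr'C ⊢; exact coneGen_smul hr'C ha.le
    have hy : c • r ∈ C := by rw [hC] at hrC ⊢; exact coneGen_smul hrC hc0
    obtain ⟨⟨b, hb0, hb⟩, _⟩ := hr''ext _ _ hx hy heq
    have hbne : b ≠ 0 := by
      rintro rfl
      rw [zero_smul] at hb
      exact hr'0 ((smul_eq_zero.mp hb).resolve_left (ne_of_gt ha))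
    have hbpos : 0 < b := lt_of_le_of_ne hb0 (Ne.symm hbne)
    refine ⟨a / b, div_pos ha hbpos, ?_⟩
    rw [div_eq_inv_mul, mul_smul, hb, smul_smul, inv_mul_cancel₀ hbne, one_smul]
  · -- c < 0: r' = a⁻¹ • r'' + (-(c/a)) • r, contradiction
    exfalso
    have hcoef : (0:ℝ) < -(c / a) := by
      rw [neg_pos]; exact div_neg_of_neg_of_pos hc0 ha
    have heq' : r' = a⁻¹ • r'' + (-(c / a)) • r := by
      rw [heq, div_eq_mul_inv]
      match_scalars <;> field_simp <;> ring
    have hx : a⁻¹ • r'' ∈ C := by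
      rw [hC] at hr''C ⊢; exact coneGen_smul hr''C (inv_nonneg.mpr ha.le)
    have hy : (-(c / a)) • r ∈ C := by
      rw [hC] at hrC ⊢; exact coneGen_smul hrC hcoef.le
    obtain ⟨_, ⟨b, hb0, hb⟩⟩ := hr'ext _ _ hx hy heq'
    rcases eq_or_lt_of_le hb0 with hb0' | hbpos
    · rw [← hb0', zero_smul] at hb
      exact hr0 ((smul_eq_zero.mp hb).resolve_left (ne_of_gt hcoef))
    · apply hr'r ((-(c / a)) / b)
      rw [div_eq_inv_mul, mul_smul, hb, smul_smul, inv_mul_cancel₀ (ne_of_gt hbpos), one_smul]
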